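/- Let κ = (9-√17)/32. Then for every x with 0 < x ≤ 1, ln(1+x) < x(1 - 2κx), and for every x > 1, ln(1+x) < (1-2κ)x. Consequently, for every n ≥ 1 and r > 0, r/2 - (n/2)ln(1 + r/n) > κ·min{r²/n, r}, i.e., the m_∞-bound (1+r/n)^(n/2)e^(-r/2) is strictly smaller than the relaxed HW bound exp(-κ·min{r²/n, r}). -/

import Mathlib

open Real Set

private lemma lt_sqrt17 : 4.12 < Real.sqrt 17 := by
  rw [show (4.12:ℝ) = Real.sqrt (4.12^2) from (Real.sqrt_sq (by norm_num)).symm]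
  exact Real.sqrt_lt_sqrt (by norm_num) (by norm_num)

private lemma sqrt17_lt : Real.sqrt 17 < 4.13 := by
  rw [show (4.13:ℝ) = Real.sqrt (4.13^2) from (Real.sqrt_sq (by norm_num)).symm]
  exact Real.sqrt_lt_sqrt (by norm_num) (by norm_num)

private lemma hd (c x : ℝ) (hx : 0 < 1 + x) :
    HasDerivAt (fun y => y - c * y ^ 2 - Real.log (1 + y)) (1 - c * (2 * x) - 1 / (1 + x)) x := by
  have h1 : HasDerivAt (fun y : ℝ => 1 + y) 1 x := by
    simpa using (hasDerivAt_id x).const_add 1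
  have h3 : HasDerivAt (fun y : ℝ => Real.log (1 + y)) (1 / (1 + x)) x := by
    simpa using h1.log hx.ne'
  have h2 : HasDerivAt (fun y : ℝ => c * y ^ 2) (c * (2 * x)) x := by
    simpa using (hasDerivAt_pow 2 x).const_mul c
  exact ((hasDerivAt_id' x).sub h2).sub h3

private lemma log_lt_aux : ∀ x : ℝ, 0 < x → x ≤ 1 →
    Real.log (1 + x) < x - (9 - Real.sqrt 17) / 16 * x ^ 2 := by
  intro x hx hx1
  set s := Real.sqrt 17 with hs
  have hs2 : s ^ 2 = 17 := Real.sq_sqrt (by norm_num)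
  have hsl : 4.12 < s := lt_sqrt17
  have hsu : s < 4.13 := sqrt17_lt
  set c : ℝ := (9 - s) / 16 with hc
  set a : ℝ := (1 + s) / 8 with ha
  have ha0 : 0 < a := by rw [ha]; nlinarith
  have ha1 : a < 1 := by rw [ha]; nlinarith
  set f : ℝ → ℝ := fun y => y - c * y ^ 2 - Real.log (1 + y) with hf
  have hmono : StrictMonoOn f (Icc 0 a) := by
    apply strictMonoOn_of_deriv_pos (convex_Icc 0 a)
    · intro y hy
      exact ((hd c y (by nlinarith [hy.1])).continuousAt).continuousWithinAt
    · intro y hy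
      rw [interior_Icc] at hy
      obtain ⟨hy0, hya⟩ := hy
      have h1y : 0 < 1 + y := by linarith
      rw [(hd c y h1y).deriv]
      have key : 1 / (1 + y) < 1 - c * (2 * y) := by
        rw [div_lt_iff₀ h1y]
        rw [ha] at hya
        rw [hc]
        nlinarith [mul_pos hy0 (show (0:ℝ) < (9 - s) * ((1 + s) / 8 - y) by nlinarith)]
      linarith
  have hanti : StrictAntiOn f (Icc a 1) := by
    apply strictAntiOn_of_deriv_neg (convex_Icc a 1)
    · intro y hy
      exact ((hd c y (by nlinarith [hy.1])).continuousAt).continuousWithinAt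
    · intro y hy
      rw [interior_Icc] at hy
      obtain ⟨hya, hy1⟩ := hy
      have hy0 : 0 < y := lt_trans ha0 hya
      have h1y : 0 < 1 + y := by linarith
      rw [(hd c y h1y).deriv]
      have key : 1 - c * (2 * y) < 1 / (1 + y) := by
        rw [lt_div_iff₀ h1y]
        rw [ha] at hya
        rw [hc]
        nlinarith [mul_pos hy0 (show (0:ℝ) < (9 - s) * (y - (1 + s) / 8) by nlinarith)]
      linarith
  have hf0 : f 0 = 0 := by simp [hf]
  have hf1 : 0 < f 1 := by
    have hl2 := Real.log_two_lt_d9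
    have : f 1 = 1 - c - Real.log 2 := by
      simp only [hf]
      norm_num
    rw [this, hc]
    nlinarith
  have hfx : 0 < f x := by
    rcases le_or_gt x a with hxa | hxa
    · rw [← hf0]
      exact hmono ⟨le_refl 0, ha0.le⟩ ⟨hx.le, hxa⟩ hx
    · have : f 1 ≤ f x := by
        rcases eq_or_lt_of_le hx1 with h | h
        · rw [h]
        · exact (hanti ⟨hxa.le, hx1⟩ ⟨ha1.le, le_refl 1⟩ h).le
      linarith
  simp only [hf] at hfx
  linarith

private lemma log_lt_aux2 : ∀ x : ℝ, 1 < x →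
    Real.log (1 + x) < (1 - (9 - Real.sqrt 17) / 16) * x := by
  intro x hx
  set s := Real.sqrt 17 with hs
  have hs2 : s ^ 2 = 17 := Real.sq_sqrt (by norm_num)
  have hsl : 4.12 < s := lt_sqrt17
  have hsu : s < 4.13 := sqrt17_lt
  have hx0 : (0:ℝ) < (1 + x) / 2 := by linarith
  have hsplit : Real.log (1 + x) = Real.log 2 + Real.log ((1 + x) / 2) := by
    rw [← Real.log_mul (by norm_num) hx0.ne']
    congr 1
    ring
  have hb : Real.log ((1 + x) / 2) ≤ (1 + x) / 2 - 1 := Real.log_le_sub_one_of_pos hx0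
  have hl2 := Real.log_two_lt_d9
  rw [hsplit]
  nlinarith

theorem stmt_13 :
    let κ : ℝ := (9 - Real.sqrt 17) / 32;
    (∀ x : ℝ, 0 < x → x ≤ 1 → Real.log (1 + x) < x * (1 - 2 * κ * x)) ∧
    (∀ x : ℝ, 1 < x → Real.log (1 + x) < (1 - 2 * κ) * x) ∧
    (∀ n : ℕ, 1 ≤ n → ∀ r : ℝ, 0 < r →
      κ * min (r ^ 2 / n) r < r / 2 - (n : ℝ) / 2 * Real.log (1 + r / n) ∧
      (1 + r / n) ^ ((n : ℝ) / 2) * Real.exp (-r / 2) <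
        Real.exp (-κ * min (r ^ 2 / n) r)) := by
  intro κ
  have hκ : κ = (9 - Real.sqrt 17) / 32 := rfl
  refine ⟨?_, ?_, ?_⟩
  · intro x hx hx1
    have h := log_lt_aux x hx hx1
    have heq : x * (1 - 2 * κ * x) = x - (9 - Real.sqrt 17) / 16 * x ^ 2 := by
      rw [hκ]; ring
    linarith
  · intro x hx
    have h := log_lt_aux2 x hx
    have heq : (1 - 2 * κ) * x = (1 - (9 - Real.sqrt 17) / 16) * x := by
      rw [hκ]; ring
    linarith
  · intro n hn r hr
    have hn0 : (0:ℝ) < n := by exact_mod_cast Nat.pos_of_ne_zero (by omega)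
    have hx : 0 < r / n := div_pos hr hn0
    have h1 : κ * min (r ^ 2 / n) r < r / 2 - (n : ℝ) / 2 * Real.log (1 + r / n) := by
      rcases le_or_gt r n with hrn | hrn
      · have hx1 : r / n ≤ 1 := (div_le_one hn0).mpr hrn
        have hmin : min (r ^ 2 / n) r = r ^ 2 / n := by
          apply min_eq_left
          rw [div_le_iff₀ hn0]
          nlinarith
        have h := log_lt_aux (r / n) hx hx1
        have key : (n : ℝ) / 2 * (r / n - (9 - Real.sqrt 17) / 16 * (r / n) ^ 2)
            = r / 2 - (9 - Real.sqrt 17) / 32 * (r ^ 2 / n) := by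
          field_simp
          ring
        have := mul_lt_mul_of_pos_left h (show (0:ℝ) < (n:ℝ)/2 by positivity)
        rw [hmin, hκ]
        linarith
      · have hx1 : 1 < r / n := (one_lt_div hn0).mpr hrn
        have hmin : min (r ^ 2 / n) r = r := by
          apply min_eq_right
          rw [le_div_iff₀ hn0]
          nlinarith
        have h := log_lt_aux2 (r / n) hx1
        have key : (n : ℝ) / 2 * ((1 - (9 - Real.sqrt 17) / 16) * (r / n))
            = r / 2 - (9 - Real.sqrt 17) / 32 * r := by
          field_simp
          ring
        have := mul_lt_mul_of_pos_left h (show (0:ℝ) < (n:ℝ)/2 by positivity)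
        rw [hmin, hκ]
        linarith
    refine ⟨h1, ?_⟩
    have hpos : (0:ℝ) < 1 + r / n := by positivity
    rw [Real.rpow_def_of_pos hpos, ← Real.exp_add]
    apply Real.exp_lt_exp.mpr
    have : -κ * min (r ^ 2 / n) r = -(κ * min (r ^ 2 / n) r) := by ring
    rw [this]
    nlinarith [h1]
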